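/- Let q be a power of 2 and let α ∈ F_q have absolute trace Tr(α) = 1. Let C be the cyclic group of order q+1 of projective transformations of PG(2,q) induced by the matrices with rows (1,0,0), (0,a,αb), (0,b,a+b), where a² + ab + αb² = 1. Then for every line r of PG(2,q) distinct from ℓ : X₁ = 0 and not passing through U₁ = (1:0:0), the C-orbit of r consists of q+1 lines forming a dual conic with dual nucleus ℓ: every point of PG(2,q) not on ℓ lies on either 0 or 2 lines of this orbit, and every point of ℓ lies on exactly 1 line of this orbit. -/

import Mathlib

open Projectivization

variable {F : Type} [Field F]

/-- The line of `PG(2,q)` with coefficient vector `u`. -/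
def lineSet (u : Fin 3 → F) : Set (Projectivization F (Fin 3 → F)) :=
  {P | u 0 * P.rep 0 + u 1 * P.rep 1 + u 2 * P.rep 2 = 0}

/-- A set of points of `PG(2,q)` is a line if it is cut out by a nontrivial homogeneous
linear equation. -/
def IsLine (l : Set (Projectivization F (Fin 3 → F))) : Prop :=
  ∃ u : Fin 3 → F, u ≠ 0 ∧ l = lineSet u

/-- The set of matrices `(1,0,0; 0,a,αb; 0,b,a+b)` with `a² + ab + αb² = 1`, inducing
the projective transformations of the cyclic group `C` of order `q + 1`. -/
def Cmatrices (F : Type) [Field F] (α : F) : Set (Matrix (Fin 3) (Fin 3) F) :=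
  {M | ∃ a b : F, a ^ 2 + a * b + α * b ^ 2 = 1 ∧
    M = Matrix.of ![![1, 0, 0], ![0, a, α * b], ![0, b, a + b]]}

/-- The image of a set `r` of points of `PG(2,q)` under the projective transformation
induced by a matrix `M`. -/
def imageSet (F : Type) [Field F] (M : Matrix (Fin 3) (Fin 3) F)
    (r : Set (Projectivization F (Fin 3 → F))) : Set (Projectivization F (Fin 3 → F)) :=
  {Q | ∃ (x y : Fin 3 → F) (hx : x ≠ 0) (hy : y ≠ 0),
    Projectivization.mk F x hx ∈ r ∧ Q = Projectivization.mk F y hy ∧ y = M.mulVec x}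

/-- The point `U₁ = (1 : 0 : 0)` of `PG(2,q)`. -/
def U₁ (F : Type) [Field F] : Projectivization F (Fin 3 → F) :=
  Projectivization.mk F ![1, 0, 0] (by
    intro h
    simpa using congrFun h 0)

/-- The orbit of a line `r` under the group `C`. -/
def ClineOrbit (F : Type) [Field F] (α : F)
    (r : Set (Projectivization F (Fin 3 → F))) :
    Set (Set (Projectivization F (Fin 3 → F))) :=
  {l | ∃ M ∈ Cmatrices F α, l = imageSet F M r}


section AuxLemmas

lemma noRoot_aux (F : Type) [Field F] [Fintype F] [Algebra (ZMod 2) F]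
    (α : F) (hα : Algebra.trace (ZMod 2) F α = 1) (s : F) : s ^ 2 + s + α ≠ 0 := by
  haveI : Fact (Nat.Prime 2) := ⟨by norm_num⟩
  haveI : CharP F 2 := charP_of_injective_algebraMap (algebraMap (ZMod 2) F).injective 2
  intro h
  have hfr : ∀ r : ZMod 2, (frobeniusEquiv F 2) (algebraMap (ZMod 2) F r) = algebraMap (ZMod 2) F r := by
    intro r
    simp [frobeniusEquiv_apply, frobenius_def, ← map_pow, ZMod.pow_card r]
  let e : F ≃ₐ[ZMod 2] F := AlgEquiv.ofRingEquiv (f := (frobeniusEquiv F 2)) hfr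
  have htr : ∀ x : F, Algebra.trace (ZMod 2) F (x ^ 2) = Algebra.trace (ZMod 2) F x := by
    intro x
    have := Algebra.trace_eq_of_algEquiv e x
    simpa [e, AlgEquiv.ofRingEquiv, frobeniusEquiv_apply, frobenius_def] using this
  have h2 : (2 : F) = 0 := by exact_mod_cast CharP.cast_eq_zero F 2
  have hs2 : α = s ^ 2 + s := by linear_combination h - (s ^ 2 + s) * h2
  rw [hs2, map_add, htr, ← two_mul] at hα
  have h22 : (2 : ZMod 2) = 0 := rfl
  rw [h22, zero_mul] at hα
  exact zero_ne_one hα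

lemma sq_inj (h2 : (2:F) = 0) : Function.Injective (fun x : F => x ^ 2) := by
  intro x y h
  simp only at h
  have hs : (x - y) ^ 2 = 0 := by linear_combination h + (y^2 - x*y)*h2
  exact sub_eq_zero.mp (pow_eq_zero_iff (n := 2) (by norm_num) |>.mp hs)

lemma aniso (α : F) (hnr : ∀ s : F, s^2 + s + α ≠ 0) (x y : F) (h : ¬(x = 0 ∧ y = 0)) :
    x^2 + x*y + α*y^2 ≠ 0 := by
  by_cases hy : y = 0
  · subst hy
    have hx : x ≠ 0 := fun hx => h ⟨hx, rfl⟩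
    simpa using pow_ne_zero 2 hx
  · intro h0
    apply hnr (x / y)
    have he : (x/y)^2 + (x/y) + α = (x^2 + x*y + α*y^2) / y^2 := by
      field_simp
    rw [he, h0, zero_div]

lemma mem_lineSet_mk (u x : Fin 3 → F) (hx : x ≠ 0) :
    Projectivization.mk F x hx ∈ lineSet u ↔ u 0 * x 0 + u 1 * x 1 + u 2 * x 2 = 0 := by
  obtain ⟨k, hk⟩ : ∃ k : Fˣ, k • x = (Projectivization.mk F x hx).rep :=
    (Projectivization.mk_eq_mk_iff F _ _ _ hx).mp (Projectivization.mk_rep _)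
  have hrep : ∀ i, (Projectivization.mk F x hx).rep i = (k : F) * x i := by
    intro i; rw [← hk]; rfl
  constructor
  · intro h
    have h' : u 0 * ((k:F) * x 0) + u 1 * ((k:F) * x 1) + u 2 * ((k:F) * x 2) = 0 := by
      rw [← hrep 0, ← hrep 1, ← hrep 2]; exact h
    have : (k:F) * (u 0 * x 0 + u 1 * x 1 + u 2 * x 2) = 0 := by linear_combination h'
    rcases mul_eq_zero.mp this with h0 | h0
    · exact absurd h0 k.ne_zero
    · exact h0
  · intro h
    show u 0 * _ + u 1 * _ + u 2 * _ = 0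
    rw [hrep 0, hrep 1, hrep 2]
    linear_combination (k : F) * h

lemma lineSet_eq_of_prop (u v : Fin 3 → F) (hu : u ≠ 0) (h : lineSet u = lineSet v) :
    ∃ k : F, v = k • u := by
  have hless : ∀ x : Fin 3 → F, u 0 * x 0 + u 1 * x 1 + u 2 * x 2 = 0 →
      v 0 * x 0 + v 1 * x 1 + v 2 * x 2 = 0 := by
    intro x hx
    by_cases hx0 : x = 0
    · subst hx0; simp
    · have := (mem_lineSet_mk u x hx0).mpr hx
      rw [h] at this
      exact (mem_lineSet_mk v x hx0).mp this
  obtain ⟨i, hi⟩ : ∃ i, u i ≠ 0 := by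
    by_contra hc
    push_neg at hc
    exact hu (funext hc)
  refine ⟨v i / u i, funext fun j => ?_⟩
  have key : u i * v j - u j * v i = 0 := by
    have hy := hless (fun l => u i * (if l = j then 1 else 0) - u j * (if l = i then 1 else 0))
    fin_cases i <;> fin_cases j <;> simp_all <;> ring_nf <;> ring_nf at hy <;>
      first
      | rfl
      | (apply hy; ring)
      | (rw [sub_eq_zero]; linear_combination hy trivial)
  have : v j = (v i / u i) * u j := by
    field_simp
    linear_combination key
  simpa [Pi.smul_apply, smul_eq_mul] using this

lemma mulVec_C (α a b : F) (x : Fin 3 → F) :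
    (Matrix.of ![![1,0,0],![0,a,α*b],![0,b,a+b]]).mulVec x
      = ![x 0, a * x 1 + α*b * x 2, b * x 1 + (a+b) * x 2] := by
  funext i
  fin_cases i <;>
    simp [Matrix.mulVec, dotProduct, Fin.sum_univ_three]

lemma imageSet_lineSet (α a b c d : F) (hN : a^2+a*b+α*b^2 = 1) (h2 : (2:F) = 0) :
    imageSet F (Matrix.of ![![1,0,0],![0,a,α*b],![0,b,a+b]]) (lineSet ![1,c,d])
      = lineSet ![1, c*(a+b)+d*b, c*α*b+d*a] := by
  ext Q
  constructor
  · rintro ⟨x, y, hx, hy, hxr, rfl, hyM⟩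
    rw [mulVec_C] at hyM
    rw [mem_lineSet_mk] at hxr ⊢
    simp only [Matrix.cons_val_zero, Matrix.cons_val_one, Matrix.head_cons,
      Matrix.cons_val_two, Matrix.tail_cons] at hxr ⊢
    have h0 : y 0 = x 0 := by rw [hyM]; rfl
    have h1 : y 1 = a * x 1 + α*b * x 2 := by rw [hyM]; rfl
    have h2' : y 2 = b * x 1 + (a+b) * x 2 := by rw [hyM]; rfl
    rw [h0, h1, h2']
    linear_combination hxr + (c * x 1 + d * x 2) * hN +
      (d*a*b*x 1 + (c*α*a*b + c*α*b^2)*x 2) * h2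
  · intro hQ
    simp only [lineSet, Set.mem_setOf_eq] at hQ
    simp only [Matrix.cons_val_zero, Matrix.cons_val_one, Matrix.head_cons,
      Matrix.cons_val_two, Matrix.tail_cons] at hQ
    set p := Q.rep with hp
    have hpne : p ≠ 0 := Q.rep_nonzero
    set x : Fin 3 → F := ![p 0, (a+b) * p 1 + α*b * p 2, b * p 1 + a * p 2] with hxdef
    have hTx : (Matrix.of ![![1,0,0],![0,a,α*b],![0,b,a+b]]).mulVec x = p := by
      rw [mulVec_C]
      have hp3 : p = ![p 0, p 1, p 2] := by funext i; fin_cases i <;> rfl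
      conv_rhs => rw [hp3]
      simp only [hxdef, Matrix.cons_val_zero, Matrix.cons_val_one, Matrix.head_cons,
        Matrix.cons_val_two, Matrix.tail_cons]
      refine congrArg₂ _ rfl (congrArg₂ _ ?_ (congrArg₂ _ ?_ rfl))
      · linear_combination (p 1) * hN + (a*α*b*p 2)*h2
      · linear_combination (p 2) * hN + (a*b*p 1 + b^2*p 1)*h2
    have hxne : x ≠ 0 := by
      intro h0
      apply hpne
      rw [← hTx, h0]
      simp [Matrix.mulVec_zero]
    refine ⟨x, p, hxne, hpne, ?_, (Projectivization.mk_rep Q).symm, hTx.symm⟩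
    rw [mem_lineSet_mk]
    simp only [hxdef, Matrix.cons_val_zero, Matrix.cons_val_one, Matrix.head_cons,
      Matrix.cons_val_two, Matrix.tail_cons]
    linear_combination hQ

lemma sol_structure (α A B t : F) (h2 : (2:F) = 0) (hD : α*A^2 + A*B + B^2 ≠ 0)
    (p q : F × F)
    (hp : p.1^2 + p.1*p.2 + α*p.2^2 = 1 ∧ p.1*A + p.2*B = t)
    (hq : q.1^2 + q.1*q.2 + α*q.2^2 = 1 ∧ q.1*A + q.2*B = t) :
    q = p ∨ q = (p.1 + t*B/(α*A^2 + A*B + B^2), p.2 + t*A/(α*A^2 + A*B + B^2)) := by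
  set D := α*A^2 + A*B + B^2 with hDdef
  have hDinv : D * D⁻¹ = 1 := mul_inv_cancel₀ hD
  obtain ⟨hp1, hp2⟩ := hp
  obtain ⟨hq1, hq2⟩ := hq
  have hlin : (q.1 - p.1) * A + (q.2 - p.2) * B = 0 := by linear_combination hq2 - hp2
  obtain ⟨lam, hl1, hl2⟩ : ∃ lam : F, q.1 - p.1 = lam * B ∧ q.2 - p.2 = lam * A := by
    by_cases hA : A = 0
    · have hB : B ≠ 0 := by
        intro hB
        apply hD; rw [hDdef, hA, hB]; ring
      refine ⟨(q.1 - p.1) / B, by field_simp, ?_⟩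
      rw [hA, mul_zero, sub_eq_zero]
      have hz : (q.2 - p.2) * B = 0 := by linear_combination hlin - (q.1-p.1)*hA
      rcases mul_eq_zero.mp hz with h' | h'
      · exact sub_eq_zero.mp h'
      · exact absurd h' hB
    · refine ⟨(q.2 - p.2) / A, ?_, by field_simp⟩
      rw [div_mul_eq_mul_div, eq_div_iff hA]
      linear_combination hlin - (q.2-p.2)*B*h2
  have e1 : q.1 = p.1 + lam * B := by linear_combination hl1
  have e2 : q.2 = p.2 + lam * A := by linear_combination hl2
  rw [e1, e2] at hq1
  have hquad : lam * (lam * D + t) = 0 := by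
    linear_combination hq1 - hp1 - lam*hp2 + lam^2*hDdef - (lam*p.1*B + α*lam*p.2*A)*h2
  rcases mul_eq_zero.mp hquad with h0 | h0
  · left
    refine Prod.ext ?_ ?_
    · linear_combination hl1 + B*h0
    · linear_combination hl2 + A*h0
  · right
    refine Prod.ext ?_ ?_ <;> simp only
    · linear_combination hl1 + B*D⁻¹*h0 - t*B*D⁻¹*h2 - lam*B*hDinv
    · linear_combination hl2 + A*D⁻¹*h0 - t*A*D⁻¹*h2 - lam*A*hDinv

lemma card_norm_one [Fintype F] (α : F) (h2 : (2:F) = 0) (hnr : ∀ s : F, s^2 + s + α ≠ 0) :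
    {p : F × F | p.1^2 + p.1*p.2 + α*p.2^2 = 1}.ncard = Fintype.card F + 1 := by
  have hbij : Function.Bijective (fun x : F => x ^ 2) :=
    ⟨sq_inj h2, Finite.surjective_of_injective (sq_inj h2)⟩
  set sqE : F ≃ F := Equiv.ofBijective _ hbij with hsqE
  set g : F → F := fun s => sqE.symm ((s^2+s+α)⁻¹) with hgdef
  have hg : ∀ s, (g s)^2 = (s^2+s+α)⁻¹ := fun s => sqE.apply_symm_apply _
  have hgne : ∀ s, g s ≠ 0 := by
    intro s hs
    have := hg s
    rw [hs] at this
    exact inv_ne_zero (hnr s) (by simpa using this.symm)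
  set φ : F → F × F := fun s => (s * g s, g s) with hφdef
  have hφinj : Function.Injective φ := by
    intro s s' h
    have h2' : g s = g s' := congrArg Prod.snd h
    have h1 : s * g s = s' * g s' := congrArg Prod.fst h
    rw [h2'] at h1
    exact mul_right_cancel₀ (hgne s') h1
  have hmem : ∀ s, φ s ∈ {p : F × F | p.1^2 + p.1*p.2 + α*p.2^2 = 1} := by
    intro s
    show (s * g s)^2 + (s * g s) * g s + α * (g s)^2 = 1
    have : (s * g s)^2 + (s * g s) * g s + α * (g s)^2 = (g s)^2 * (s^2 + s + α) := by ring
    rw [this, hg s, inv_mul_cancel₀ (hnr s)]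
  have hset : {p : F × F | p.1^2 + p.1*p.2 + α*p.2^2 = 1} = insert (1,0) (Set.range φ) := by
    ext p
    simp only [Set.mem_setOf_eq, Set.mem_insert_iff, Set.mem_range]
    obtain ⟨a, b⟩ := p
    simp only
    constructor
    · intro hab
      by_cases hb : b = 0
      · left
        have ha : a = 1 := by
          apply sq_inj h2
          show a^2 = 1^2
          linear_combination hab - (a + α*b)*hb
        rw [ha, hb]
      · right
        refine ⟨a / b, ?_⟩
        have hbinv : b * b⁻¹ = 1 := mul_inv_cancel₀ hb
        have hbg : g (a/b) = b := by
          apply sq_inj h2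
          show (g (a/b))^2 = b^2
          rw [hg]
          refine inv_eq_of_mul_eq_one_right ?_
          show ((a/b)^2 + (a/b) + α) * b^2 = 1
          linear_combination (a^2*(b*b⁻¹+1) + a*b)*hbinv + hab
        show ((a/b) * g (a/b), g (a/b)) = (a, b)
        rw [hbg]
        refine Prod.ext ?_ rfl
        show (a/b) * b = a
        field_simp
    · rintro (h | ⟨s, hs⟩)
      · rw [show a = 1 from congrArg Prod.fst h, show b = 0 from congrArg Prod.snd h]
        norm_num
      · have := hmem s
        rw [hs] at this
        exact this
  rw [hset, Set.ncard_insert_of_notMem, ← Set.image_univ,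
    Set.ncard_image_of_injective _ hφinj, Set.ncard_univ, Nat.card_eq_fintype_card]
  · intro ⟨s, hs⟩
    exact hgne s (by simpa using congrArg Prod.snd hs)

lemma sol_count [Fintype F] (α A B t : F) (h2 : (2:F) = 0) (hnr : ∀ s : F, s^2 + s + α ≠ 0) :
    (t = 0 → ¬(A = 0 ∧ B = 0) →
      {p : F × F | p.1^2 + p.1*p.2 + α*p.2^2 = 1 ∧ p.1*A + p.2*B = t}.ncard = 1) ∧
    (t ≠ 0 →
      {p : F × F | p.1^2 + p.1*p.2 + α*p.2^2 = 1 ∧ p.1*A + p.2*B = t}.ncard = 0 ∨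
      {p : F × F | p.1^2 + p.1*p.2 + α*p.2^2 = 1 ∧ p.1*A + p.2*B = t}.ncard = 2) := by
  set Sol := {p : F × F | p.1^2 + p.1*p.2 + α*p.2^2 = 1 ∧ p.1*A + p.2*B = t} with hSol
  constructor
  · intro ht hAB
    subst ht
    have hD : α*A^2 + A*B + B^2 ≠ 0 := by
      have h' := aniso α hnr B A (fun h => hAB ⟨h.2, h.1⟩)
      intro h0; apply h'; linear_combination h0
    have hbij : Function.Bijective (fun x : F => x ^ 2) :=
      ⟨sq_inj h2, Finite.surjective_of_injective (sq_inj h2)⟩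
    obtain ⟨μ, hμ⟩ := hbij.2 (α*A^2 + A*B + B^2)⁻¹
    simp only at hμ
    have hDinv : (α*A^2 + A*B + B^2) * (α*A^2 + A*B + B^2)⁻¹ = 1 := mul_inv_cancel₀ hD
    have hp₀ : ((μ*B, μ*A) : F × F) ∈ Sol := by
      constructor
      · show (μ*B)^2 + (μ*B)*(μ*A) + α*(μ*A)^2 = 1
        linear_combination (B^2 + A*B + α*A^2)*hμ + hDinv
      · show (μ*B)*A + (μ*A)*B = 0
        linear_combination μ*A*B*h2
    have hset : Sol = {((μ*B, μ*A) : F × F)} := by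
      ext q
      simp only [Set.mem_singleton_iff]
      constructor
      · intro hq
        rcases sol_structure α A B 0 h2 hD _ q hp₀ hq with h | h
        · exact h
        · simpa using h
      · rintro rfl; exact hp₀
    rw [hset, Set.ncard_singleton]
  · intro ht
    rcases Set.eq_empty_or_nonempty Sol with he | ⟨p, hp⟩
    · left; rw [he, Set.ncard_empty]
    · right
      have hAB : ¬(A = 0 ∧ B = 0) := by
        rintro ⟨hA, hB⟩
        apply ht
        rw [← hp.2, hA, hB]; ring
      have hD : α*A^2 + A*B + B^2 ≠ 0 := by
        have h' := aniso α hnr B A (fun h => hAB ⟨h.2, h.1⟩)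
        intro h0; apply h'; linear_combination h0
      have hDinv : (α*A^2+A*B+B^2) * (α*A^2+A*B+B^2)⁻¹ = 1 := mul_inv_cancel₀ hD
      have hclosure : ((p.1 + t*B/(α*A^2+A*B+B^2), p.2 + t*A/(α*A^2+A*B+B^2)) : F × F) ∈ Sol := by
        constructor
        · show (p.1 + t*B/(α*A^2+A*B+B^2))^2 + (p.1 + t*B/(α*A^2+A*B+B^2))*(p.2 + t*A/(α*A^2+A*B+B^2))
            + α*(p.2 + t*A/(α*A^2+A*B+B^2))^2 = 1
          linear_combination hp.1 + t*(α*A^2+A*B+B^2)⁻¹*hp.2 + t^2*(α*A^2+A*B+B^2)⁻¹*hDinv +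
            (p.1*t*B*(α*A^2+A*B+B^2)⁻¹ + α*p.2*t*A*(α*A^2+A*B+B^2)⁻¹ + t^2*(α*A^2+A*B+B^2)⁻¹)*h2
        · show (p.1 + t*B/(α*A^2+A*B+B^2))*A + (p.2 + t*A/(α*A^2+A*B+B^2))*B = t
          linear_combination hp.2 + t*A*B*(α*A^2+A*B+B^2)⁻¹*h2
      have hne : p ≠ ((p.1 + t*B/(α*A^2+A*B+B^2), p.2 + t*A/(α*A^2+A*B+B^2)) : F × F) := by
        intro h
        have h1 : t*B/(α*A^2+A*B+B^2) = 0 := by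
          have h' := congrArg Prod.fst h
          simp only at h'
          linear_combination -h'
        have h2' : t*A/(α*A^2+A*B+B^2) = 0 := by
          have h' := congrArg Prod.snd h
          simp only at h'
          linear_combination -h'
        have hB : B = 0 :=
          (mul_eq_zero.mp ((div_eq_zero_iff.mp h1).resolve_right hD)).resolve_left ht
        have hA : A = 0 :=
          (mul_eq_zero.mp ((div_eq_zero_iff.mp h2').resolve_right hD)).resolve_left ht
        exact hAB ⟨hA, hB⟩
      have hset : Sol = {p, ((p.1 + t*B/(α*A^2+A*B+B^2), p.2 + t*A/(α*A^2+A*B+B^2)) : F × F)} := by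
        ext q
        simp only [Set.mem_insert_iff, Set.mem_singleton_iff]
        constructor
        · intro hq
          exact sol_structure α A B t h2 hD p q hp hq
        · rintro (rfl | rfl)
          · exact hp
          · exact hclosure
      rw [hset, Set.ncard_pair hne]

end AuxLemmas

/-- Let `q = 2ⁿ` and let `α ∈ F_q` have absolute trace `1`. For every line `r` of
`PG(2,q)` distinct from `ℓ : X₁ = 0` and not through `U₁ = (1:0:0)`, the `C`-orbit of
`r` consists of `q + 1` lines forming a dual conic with dual nucleus `ℓ`: every point
off `ℓ` lies on `0` or `2` lines of the orbit, and every point of `ℓ` lies on exactly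
`1` line of the orbit. -/
theorem C_line_orbit_dual_conic
    (n q : ℕ) (hn : 0 < n) (hq : q = 2 ^ n)
    (F : Type) [Field F] [Fintype F] [Algebra (ZMod 2) F] (hF : Fintype.card F = q)
    (α : F) (hα : Algebra.trace (ZMod 2) F α = 1)
    (r : Set (Projectivization F (Fin 3 → F))) (hr : IsLine r)
    (hrl : r ≠ {P : Projectivization F (Fin 3 → F) | P.rep 0 = 0})
    (hU₁ : U₁ F ∉ r) :
    (∀ l ∈ ClineOrbit F α r, IsLine l) ∧
    (ClineOrbit F α r).ncard = q + 1 ∧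
    (∀ P : Projectivization F (Fin 3 → F), P.rep 0 ≠ 0 →
      {l ∈ ClineOrbit F α r | P ∈ l}.ncard = 0 ∨
      {l ∈ ClineOrbit F α r | P ∈ l}.ncard = 2) ∧
    (∀ P : Projectivization F (Fin 3 → F), P.rep 0 = 0 →
      {l ∈ ClineOrbit F α r | P ∈ l}.ncard = 1) := by
  haveI : Fact (Nat.Prime 2) := ⟨by norm_num⟩
  haveI hchar : CharP F 2 := charP_of_injective_algebraMap (algebraMap (ZMod 2) F).injective 2
  have h2 : (2:F) = 0 := by exact_mod_cast CharP.cast_eq_zero F 2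
  have hnr : ∀ s : F, s^2 + s + α ≠ 0 := noRoot_aux F α hα
  obtain ⟨u, hu, hru⟩ := hr
  have hU1iff : (U₁ F ∈ lineSet u) ↔ u 0 = 0 := by
    rw [U₁, mem_lineSet_mk]
    simp
  have hu0 : u 0 ≠ 0 := by
    intro h0
    apply hU₁
    rw [hru]
    exact hU1iff.mpr h0
  have hu0inv : u 0 * (u 0)⁻¹ = 1 := mul_inv_cancel₀ hu0
  set c : F := u 1 / u 0 with hcdef
  set d : F := u 2 / u 0 with hddef
  have hcd : ¬(c = 0 ∧ d = 0) := by
    rintro ⟨hc, hd⟩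
    apply hrl
    have h1 : u 1 = 0 := by
      rcases div_eq_zero_iff.mp hc with h | h
      · exact h
      · exact absurd h hu0
    have h2' : u 2 = 0 := by
      rcases div_eq_zero_iff.mp hd with h | h
      · exact h
      · exact absurd h hu0
    rw [hru]
    ext P
    simp only [lineSet, Set.mem_setOf_eq, h1, h2', zero_mul, add_zero]
    constructor
    · intro h
      rcases mul_eq_zero.mp h with h | h
      · exact absurd h hu0
      · exact h
    · intro h
      rw [h, mul_zero]
  have hr' : r = lineSet ![1, c, d] := by
    rw [hru]
    ext P
    simp only [lineSet, Set.mem_setOf_eq, Matrix.cons_val_zero, Matrix.cons_val_one,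
      Matrix.head_cons, Matrix.cons_val_two, Matrix.tail_cons]
    constructor
    · intro h
      linear_combination (u 0)⁻¹ * h - (P.rep 0) * hu0inv
    · intro h
      linear_combination u 0 * h - (P.rep 1 * u 1 + P.rep 2 * u 2) * hu0inv
  set ψ : F × F → Set (Projectivization F (Fin 3 → F)) :=
    fun p => lineSet ![1, c*(p.1+p.2)+d*p.2, c*α*p.2+d*p.1] with hψdef
  set S₁ : Set (F × F) := {p : F × F | p.1^2 + p.1*p.2 + α*p.2^2 = 1} with hS₁def
  have horb : ClineOrbit F α r = ψ '' S₁ := by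
    ext l
    constructor
    · rintro ⟨M, ⟨a, b, hN, rfl⟩, rfl⟩
      refine ⟨(a, b), hN, ?_⟩
      rw [hr', hψdef]
      simp only
      rw [imageSet_lineSet α a b c d hN h2]
    · rintro ⟨⟨a, b⟩, hN, rfl⟩
      refine ⟨_, ⟨a, b, hN, rfl⟩, ?_⟩
      rw [hr', hψdef]
      simp only
      rw [imageSet_lineSet α a b c d hN h2]
  have hvne : ∀ p : F × F, (![1, c*(p.1+p.2)+d*p.2, c*α*p.2+d*p.1] : Fin 3 → F) ≠ 0 := by
    intro p h
    simpa using congrFun h 0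
  have hD'' : d^2 + d*c + α*c^2 ≠ 0 :=
    aniso α hnr d c (fun h => hcd ⟨h.2, h.1⟩)
  have hinj : Set.InjOn ψ S₁ := by
    rintro ⟨a, b⟩ _ ⟨a', b'⟩ _ hψeq
    obtain ⟨k, hk⟩ := lineSet_eq_of_prop _ _ (hvne (a, b)) hψeq
    have hk0 : k = 1 := by
      have := congrFun hk 0
      simp only [Matrix.cons_val_zero, Pi.smul_apply, smul_eq_mul, mul_one] at this
      exact this.symm
    rw [hk0, one_smul] at hk
    have e1 : c*(a'+b')+d*b' = c*(a+b)+d*b := by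
      have := congrFun hk 1
      simpa using this
    have e2 : c*α*b'+d*a' = c*α*b+d*a := by
      have := congrFun hk 2
      simpa using this
    have hΔa : (d^2 + d*c + α*c^2) * (a - a') = 0 := by
      linear_combination (-(c*α))*e1 - (c+d)*e2 - (c*α*(c+d)*(b-b'))*h2
    have hΔb : (d^2 + d*c + α*c^2) * (b - b') = 0 := by
      linear_combination (-c)*e2 - d*e1 - (c*d*(a-a'))*h2
    have ha : a = a' := by
      exact sub_eq_zero.mp ((mul_eq_zero.mp hΔa).resolve_left hD'')
    have hb : b = b' := by
      exact sub_eq_zero.mp ((mul_eq_zero.mp hΔb).resolve_left hD'')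
    rw [ha, hb]
  have hcount : ∀ P : Projectivization F (Fin 3 → F),
      {l ∈ ClineOrbit F α r | P ∈ l}.ncard
        = {p : F × F | p.1^2 + p.1*p.2 + α*p.2^2 = 1 ∧
            p.1*(c*P.rep 1 + d*P.rep 2) + p.2*((c+d)*P.rep 1 + c*α*P.rep 2) = P.rep 0}.ncard := by
    intro P
    have hmemiff : ∀ p : F × F, P ∈ ψ p ↔
        p.1*(c*P.rep 1 + d*P.rep 2) + p.2*((c+d)*P.rep 1 + c*α*P.rep 2) = P.rep 0 := by
      intro p
      rw [hψdef]
      simp only [lineSet, Set.mem_setOf_eq, Matrix.cons_val_zero, Matrix.cons_val_one,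
        Matrix.head_cons, Matrix.cons_val_two, Matrix.tail_cons]
      constructor
      · intro h
        linear_combination h - (P.rep 0) * h2
      · intro h
        linear_combination h + (P.rep 0) * h2
    have hseteq : {l ∈ ClineOrbit F α r | P ∈ l}
        = ψ '' {p ∈ S₁ | p.1*(c*P.rep 1 + d*P.rep 2) + p.2*((c+d)*P.rep 1 + c*α*P.rep 2) = P.rep 0} := by
      rw [horb]
      ext l
      constructor
      · rintro ⟨⟨p, hp, rfl⟩, hPl⟩
        exact ⟨p, ⟨hp, (hmemiff p).mp hPl⟩, rfl⟩
      · rintro ⟨p, ⟨hp, hlin⟩, rfl⟩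
        exact ⟨⟨p, hp, rfl⟩, (hmemiff p).mpr hlin⟩
    rw [hseteq, Set.ncard_image_of_injOn (hinj.mono (Set.sep_subset _ _))]
    congr 1
  refine ⟨?_, ?_, ?_, ?_⟩
  · intro l hl
    rw [horb] at hl
    obtain ⟨p, _, rfl⟩ := hl
    exact ⟨_, hvne p, rfl⟩
  · rw [horb, Set.ncard_image_of_injOn hinj, hS₁def, card_norm_one α h2 hnr, hF]
  · intro P hP0
    rw [hcount P]
    exact (sol_count α _ _ _ h2 hnr).2 hP0
  · intro P hP0
    rw [hcount P]
    have hP12 : ¬(P.rep 1 = 0 ∧ P.rep 2 = 0) := by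
      rintro ⟨h1, h2'⟩
      apply P.rep_nonzero
      funext i
      fin_cases i
      · exact hP0
      · exact h1
      · exact h2'
    have hAB : ¬(c*P.rep 1 + d*P.rep 2 = 0 ∧ (c+d)*P.rep 1 + c*α*P.rep 2 = 0) := by
      rintro ⟨hA, hB⟩
      apply hP12
      constructor
      · have hz : (d^2 + d*c + α*c^2) * P.rep 1 = 0 := by
          linear_combination c*α*hA + d*hB - (c*d*α*P.rep 2)*h2
        exact (mul_eq_zero.mp hz).resolve_left hD''
      · have hz : (d^2 + d*c + α*c^2) * P.rep 2 = 0 := by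
          linear_combination (c+d)*hA + c*hB - (c*(c+d)*P.rep 1)*h2
        exact (mul_eq_zero.mp hz).resolve_left hD''
    have := (sol_count α (c*P.rep 1 + d*P.rep 2) ((c+d)*P.rep 1 + c*α*P.rep 2) (P.rep 0) h2 hnr).1 hP0 hAB
    rw [hP0] at this ⊢
    exact this
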